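/- arXiv:1409.3511 — 7 statements merged into one kernel-verified Lean document; each statement's English description precedes it below -/
import Mathlib

section
/- If a power series ∑ a_n t^n has all coefficients real and nonnegative, and its radius of convergence R is finite and positive, then the function it defines cannot be analytically continued to a neighborhood of t = R (Pringsheim's theorem), i.e., R is a singular point. -/
open scoped ENNReal NNReal
open FormalMultilinearSeries

private lemma fms_diag_congr {p q : FormalMultilinearSeries ℂ ℂ ℂ}
    (h : ∀ n, p n (fun _ => 1) = q n (fun _ => 1)) : p = q := by
  ext n
  exact h n

private lemma ofScalars_deriv {c : ℕ → ℂ} {f : ℂ → ℂ} {r : ℝ≥0∞}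
    (hf : HasFPowerSeriesOnBall f (ofScalars ℂ c) 0 r) :
    HasFPowerSeriesOnBall (deriv f)
      (ofScalars ℂ (fun n => ((n : ℂ) + 1) * c (n + 1))) 0 r := by
  have h1 := (ContinuousLinearMap.apply ℂ ℂ (1 : ℂ)).comp_hasFPowerSeriesOnBall hf.fderiv
  have hfun : (⇑(ContinuousLinearMap.apply ℂ ℂ (1 : ℂ)) ∘ fderiv ℂ f) = deriv f := by
    funext z
    simp [fderiv_apply_one_eq_deriv]
  have hser : (ContinuousLinearMap.apply ℂ ℂ (1 : ℂ)).compFormalMultilinearSeries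
      ((ofScalars ℂ c).derivSeries) = ofScalars ℂ (fun n => ((n : ℂ) + 1) * c (n + 1)) := by
    apply fms_diag_congr
    intro n
    have h2 := derivSeries_apply_diag (ofScalars ℂ c) n (1 : ℂ)
    rw [ContinuousLinearMap.compFormalMultilinearSeries_apply,
      ContinuousLinearMap.compContinuousMultilinearMap_coe]
    simp only [Function.comp_apply, ContinuousLinearMap.apply_apply]
    rw [h2, ofScalars_apply_eq, ofScalars_apply_eq]
    simp [nsmul_eq_mul]
  rw [hfun, hser] at h1
  exact h1

private lemma ofScalars_iteratedDeriv {c : ℕ → ℂ} {f : ℂ → ℂ} {r : ℝ≥0∞}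
    (hf : HasFPowerSeriesOnBall f (ofScalars ℂ c) 0 r) (k : ℕ) :
    HasFPowerSeriesOnBall (iteratedDeriv k f)
      (ofScalars ℂ (fun n => ((n + k).descFactorial k : ℂ) * c (n + k))) 0 r := by
  induction k generalizing c f with
  | zero => simpa using hf
  | succ k ih =>
    rw [iteratedDeriv_succ']
    have h2 := ih (ofScalars_deriv hf)
    have hser : (fun n => ((n + k).descFactorial k : ℂ) * (((n + k : ℕ) : ℂ) + 1) * c (n + k + 1))
        = fun n => ((n + (k + 1)).descFactorial (k + 1) : ℂ) * c (n + (k + 1)) := by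
      funext n
      have := Nat.succ_descFactorial_succ (n + k) k
      have hcast : (((n + k + 1).descFactorial (k + 1) : ℕ) : ℂ)
          = ((n + k + 1 : ℕ) : ℂ) * ((n + k).descFactorial k : ℂ) := by
        rw [this]; push_cast; ring
      have hn : n + (k + 1) = n + k + 1 := by omega
      rw [hn, hcast]
      push_cast
      ring
    rw [← hser]
    convert h2 using 2 with n
    funext m
    ring

/-- **Pringsheim's theorem.** If a power series `∑ a_n t^n` has all coefficients real and
nonnegative, and its radius of convergence `R` is finite and positive, then the holomorphic
function it defines on the open disk of radius `R` cannot be analytically continued to a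
neighbourhood of `t = R`: there is no holomorphic function on an open set containing both the
open disk of radius `R` and the point `R` which agrees with the series on the disk. -/
theorem stmt_4 (a : ℕ → ℝ) (ha : ∀ n, 0 ≤ a n) (R : ℝ) (hR0 : 0 < R)
    (hconv : ∀ x : ℝ, 0 ≤ x → x < R → Summable fun n => a n * x ^ n)
    (hdiv : ∀ x : ℝ, R < x → ¬ Summable fun n => a n * x ^ n) :
    ¬ ∃ (U : Set ℂ) (g : ℂ → ℂ), IsOpen U ∧ Metric.ball (0 : ℂ) R ⊆ U ∧ (R : ℂ) ∈ U ∧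
      DifferentiableOn ℂ g U ∧
      ∀ z ∈ Metric.ball (0 : ℂ) R, g z = ∑' n : ℕ, (a n : ℂ) * z ^ n := by

  rintro ⟨U, g, hUopen, hballU, hRU, hgdiff, hgf⟩
  set p : FormalMultilinearSeries ℂ ℂ ℂ := ofScalars ℂ (fun n => (a n : ℂ)) with hp
  have hpnorm : ∀ n, ‖p n‖ = a n := by
    intro n
    rw [hp, FormalMultilinearSeries.ofScalars_norm]
    simp [abs_of_nonneg (ha n)]
  have hrad : ENNReal.ofReal R ≤ p.radius := by
    apply ENNReal.le_of_forall_nnreal_lt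
    intro r hr
    have hrR : (r : ℝ) < R := by
      have h1 : r < R.toNNReal := by
        rwa [ENNReal.ofReal, ENNReal.coe_lt_coe] at hr
      calc (r : ℝ) < (R.toNNReal : ℝ) := by exact_mod_cast h1
        _ = R := Real.coe_toNNReal R hR0.le
    apply p.le_radius_of_summable_norm
    have h2 := hconv r r.2 hrR
    simpa only [hpnorm] using h2
  set h : ℂ → ℂ := p.sum with hh
  have hpball : HasFPowerSeriesOnBall h p 0 (ENNReal.ofReal R) := by
    refine ⟨hrad, by simp [hR0], fun {y} hy => ?_⟩
    have := p.hasSum (EMetric.ball_subset_ball hrad hy)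
    simpa using this
  have hgh : ∀ z ∈ Metric.ball (0 : ℂ) R, g z = h z := by
    intro z hz
    rw [hgf z hz, hh, FormalMultilinearSeries.sum]
    congr 1
    funext n
    rw [hp, FormalMultilinearSeries.ofScalars_apply_eq]
    simp [smul_eq_mul]
  obtain ⟨ε, hε0, hεU⟩ := Metric.isOpen_iff.mp hUopen _ hRU
  set δ : ℝ := min ε R / 16 with hδdef
  have hδ0 : 0 < δ := by
    have := lt_min hε0 hR0
    positivity
  have h16ε : 16 * δ ≤ ε := by
    have := min_le_left ε R
    rw [hδdef]; linarith
  have h16R : 16 * δ ≤ R := by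
    have := min_le_right ε R
    rw [hδdef]; linarith
  set ρ : ℝ := R - 4 * δ with hρdef
  have hρ0 : 0 < ρ := by rw [hρdef]; linarith
  have hρR : ρ < R := by rw [hρdef]; linarith
  set t : ℝ≥0 := (6 * δ).toNNReal with htdef
  have ht0 : 0 < t := Real.toNNReal_pos.mpr (by positivity)
  have htc : (t : ℝ) = 6 * δ := Real.coe_toNNReal _ (by positivity)
  have hsubU : Metric.closedBall ((ρ : ℂ)) t ⊆ U := by
    intro z hz
    apply hεU
    rw [Metric.mem_ball]
    rw [Metric.mem_closedBall, htc] at hz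
    have h2 : dist ((ρ : ℂ)) ((R : ℂ)) = 4 * δ := by
      rw [dist_eq_norm, ← Complex.ofReal_sub, Complex.norm_real, Real.norm_eq_abs,
        abs_of_nonpos (by rw [hρdef]; linarith)]
      rw [hρdef]; ring
    calc dist z ((R : ℂ)) ≤ dist z ((ρ : ℂ)) + dist ((ρ : ℂ)) ((R : ℂ)) := dist_triangle _ _ _
      _ ≤ 6 * δ + 4 * δ := by rw [h2]; linarith
      _ < ε := by linarith
  set q := cauchyPowerSeries g ((ρ : ℂ)) t with hqdef
  have hq : HasFPowerSeriesOnBall g q ((ρ : ℂ)) t :=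
    (hgdiff.mono hsubU).hasFPowerSeriesOnBall ht0
  have hρball : ((ρ : ℂ)) ∈ Metric.ball (0 : ℂ) R := by
    rw [Metric.mem_ball, dist_zero_right]
    simpa [abs_of_pos hρ0] using hρR
  have hghev : g =ᶠ[nhds ((ρ : ℂ))] h :=
    Filter.eventuallyEq_of_mem (Metric.isOpen_ball.mem_nhds hρball) (fun z hz => hgh z hz)
  set w : ℕ → ℕ → ℝ := fun k m => ((m + k).choose k : ℝ) * a (m + k) * ρ ^ m with hwdef
  have hwnn : ∀ k m, 0 ≤ w k m := by
    intro k m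
    apply mul_nonneg (mul_nonneg (by positivity) (ha _)) (by positivity)
  set ck : ℕ → ℝ := fun k => (q k (fun _ => 1)).re with hckdef
  have hmain : ∀ k, HasSum (w k) (ck k) ∧ (q k (fun _ => 1)).im = 0 := by
    intro k
    have Hk := ofScalars_iteratedDeriv hpball k
    have hmem : ((ρ : ℂ)) ∈ Metric.eball (0 : ℂ) (ENNReal.ofReal R) := by
      rw [Metric.mem_eball, edist_zero_right, ← ofReal_norm,
        ENNReal.ofReal_lt_ofReal_iff hR0]
      simpa [abs_of_pos hρ0] using hρR
    have hs1 := Hk.hasSum hmem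
    rw [zero_add] at hs1
    have hfact := hq.factorial_smul (1 : ℂ) k
    have hit : iteratedFDeriv ℂ k g ((ρ : ℂ)) (fun _ => 1) = iteratedDeriv k h ((ρ : ℂ)) := by
      rw [← iteratedDeriv_eq_iteratedFDeriv]
      exact hghev.iteratedDeriv_eq k
    rw [hit] at hfact
    have hs2 : HasSum (fun m => (((k.factorial : ℝ) * w k m : ℝ) : ℂ))
        ((k.factorial : ℂ) * q k (fun _ => 1)) := by
      have heq : (fun m => (((k.factorial : ℝ) * w k m : ℝ) : ℂ))
          = fun m => (ofScalars ℂ (fun n => ((n + k).descFactorial k : ℂ) * (a (n + k) : ℂ))) m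
            (fun _ => ((ρ : ℂ))) := by
        funext m
        rw [FormalMultilinearSeries.ofScalars_apply_eq, smul_eq_mul]
        rw [hwdef]
        push_cast [Nat.descFactorial_eq_factorial_mul_choose]
        ring
      rw [heq]
      have hlim : ((k.factorial : ℂ) * q k (fun _ => 1)) = iteratedDeriv k h ((ρ : ℂ)) := by
        rw [← hfact, nsmul_eq_mul]
      rw [hlim]
      exact hs1
    rw [Complex.hasSum_iff] at hs2
    obtain ⟨hre, him⟩ := hs2
    simp only [Complex.ofReal_re, Complex.ofReal_im, Complex.mul_im, Complex.mul_re] at hre him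
    have hkim : (q k (fun _ => 1)).im = 0 := by
      have h0 : HasSum (fun _ : ℕ => (0 : ℝ))
          ((k.factorial : ℂ).re * (q k (fun _ => 1)).im
            + (k.factorial : ℂ).im * (q k (fun _ => 1)).re) := him
      have := h0.unique hasSum_zero
      simp at this
      rcases this with h | h
      · exact absurd h (Nat.cast_ne_zero.mpr k.factorial_ne_zero)
      · exact h
    constructor
    · have hre2 : HasSum (fun m => (k.factorial : ℝ) * w k m)
          ((k.factorial : ℝ) * ck k) := by
        convert hre using 1
        rw [hckdef]
        simp [hkim, Complex.natCast_im, Complex.natCast_re]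
      exact (hasSum_mul_left_iff (by exact_mod_cast k.factorial_ne_zero)).mp hre2
    · exact hkim
  have hck0 : ∀ k, 0 ≤ ck k := fun k => hasSum_le (fun m => hwnn k m) hasSum_zero (hmain k).1
  have hckle : ∀ k, ck k ≤ ‖q k‖ := by
    intro k
    have h1 : q k (fun _ => 1) = ((ck k : ℝ) : ℂ) := by
      apply Complex.ext
      · rfl
      · simp only [Complex.ofReal_im]; exact (hmain k).2
    have h2 := (q k).le_opNorm (fun _ => 1)
    rw [h1] at h2
    simpa [abs_of_nonneg (hck0 k)] using h2
  set s : ℝ := 5 * δ with hsdef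
  have hs0 : 0 ≤ s := by positivity
  have hsum1 : Summable (fun k => ‖q k‖ * s ^ k) := by
    have hlt : (s.toNNReal : ℝ≥0∞) < q.radius := by
      refine lt_of_lt_of_le ?_ hq.r_le
      rw [ENNReal.coe_lt_coe]
      rw [← Real.toNNReal_coe (r := t), htc]
      exact (Real.toNNReal_lt_toNNReal_iff (by positivity)).mpr (by linarith)
    have := q.summable_norm_mul_pow hlt
    simpa [Real.coe_toNNReal s hs0] using this
  have hsum2 : Summable (fun k => ck k * s ^ k) := by
    apply Summable.of_nonneg_of_le
      (fun k => mul_nonneg (hck0 k) (pow_nonneg hs0 k))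
      (fun k => mul_le_mul_of_nonneg_right (hckle k) (pow_nonneg hs0 k)) hsum1
  set M : ℝ := ∑' k, ck k * s ^ k with hMdef
  set x : ℝ := ρ + s with hxdef
  have hRx : R < x := by rw [hxdef, hρdef, hsdef]; linarith
  refine hdiv x hRx ?_
  have hx0 : 0 ≤ x := by rw [hxdef]; linarith
  apply summable_of_sum_range_le (c := M)
    (fun n => mul_nonneg (ha n) (pow_nonneg hx0 n))
  intro N
  set T : ℕ → ℕ → ℝ := fun n k => a n * ((n.choose k : ℝ) * s ^ k * ρ ^ (n - k)) with hTdef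
  have hTnn : ∀ n k, 0 ≤ T n k := by
    intro n k
    apply mul_nonneg (ha n) (by positivity)
  have hxpow : ∀ n ∈ Finset.range N, a n * x ^ n = ∑ k ∈ Finset.range N, T n k := by
    intro n hn
    rw [Finset.mem_range] at hn
    have h1 : x ^ n = ∑ k ∈ Finset.range (n + 1),
        s ^ k * ρ ^ (n - k) * (n.choose k : ℝ) := by
      rw [hxdef, add_comm ρ s, add_pow]
    rw [h1, Finset.mul_sum]
    have h2 : ∀ k, a n * (s ^ k * ρ ^ (n - k) * (n.choose k : ℝ)) = T n k := by
      intro k; rw [hTdef]; ring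
    simp only [h2]
    apply Finset.sum_subset (Finset.range_subset_range.mpr (by omega))
    intro k hk hk'
    have hnk : n < k := by
      rw [Finset.mem_range] at hk'
      omega
    simp [hTdef, Nat.choose_eq_zero_of_lt hnk]
  have hinner : ∀ k ∈ Finset.range N, ∑ n ∈ Finset.range N, T n k ≤ ck k * s ^ k := by
    intro k _
    have e1 : ∑ n ∈ Finset.range N, T n k ≤ ∑ n ∈ Finset.range (k + N), T n k :=
      Finset.sum_le_sum_of_subset_of_nonneg (Finset.range_subset_range.mpr (by omega))
        (fun n _ _ => hTnn n k)
    rw [Finset.sum_range_add] at e1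
    have e2 : ∑ n ∈ Finset.range k, T n k = 0 := by
      apply Finset.sum_eq_zero
      intro n hn
      rw [Finset.mem_range] at hn
      simp [hTdef, Nat.choose_eq_zero_of_lt hn]
    have e3 : ∀ m, T (k + m) k = w k m * s ^ k := by
      intro m
      rw [hTdef, hwdef]
      simp only [Nat.add_sub_cancel_left]
      rw [show k + m = m + k by omega]
      ring
    rw [e2, zero_add] at e1
    simp only [e3] at e1
    calc ∑ n ∈ Finset.range N, T n k ≤ ∑ m ∈ Finset.range N, w k m * s ^ k := e1
      _ = (∑ m ∈ Finset.range N, w k m) * s ^ k := by rw [Finset.sum_mul]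
      _ ≤ ck k * s ^ k := by
          apply mul_le_mul_of_nonneg_right _ (pow_nonneg hs0 k)
          exact sum_le_hasSum (Finset.range N) (fun m _ => hwnn k m) (hmain k).1
  calc ∑ n ∈ Finset.range N, a n * x ^ n
      = ∑ n ∈ Finset.range N, ∑ k ∈ Finset.range N, T n k := Finset.sum_congr rfl hxpow
    _ = ∑ k ∈ Finset.range N, ∑ n ∈ Finset.range N, T n k := Finset.sum_comm
    _ ≤ ∑ k ∈ Finset.range N, ck k * s ^ k := Finset.sum_le_sum hinner
    _ ≤ M := Summable.sum_le_tsum (Finset.range N)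
        (fun k _ => mul_nonneg (hck0 k) (pow_nonneg hs0 k)) hsum2
end

section
/- Let Γ₁ be a directed graph with bounded cycles, S a finite set of vertices of Γ₁ such that every closed path in Γ₁ passes through S, and π : Γ₁ → Γ₂ a weak cover. Then the number of closed paths of length n in Γ₁ satisfies C(Γ₁, n) ≤ n · |S| · C(Γ₂, n). -/
/-- A directed multigraph: vertices, edges, and source/target maps. -/
structure Digraph' where
  V : Type
  E : Type
  s : E → V
  t : E → V

/-- A map of directed multigraphs. -/
structure GraphMap (G₁ G₂ : Digraph') where
  onV : G₁.V → G₂.V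
  onE : G₁.E → G₂.E
  hs : ∀ e, G₂.s (onE e) = onV (G₁.s e)
  ht : ∀ e, G₂.t (onE e) = onV (G₁.t e)

/-- A graph map is a weak cover if it is surjective on vertices and induces a bijection
between the outgoing edges of `v` and the outgoing edges of `π(v)` for every vertex `v`. -/
def IsWeakCover {G₁ G₂ : Digraph'} (π : GraphMap G₁ G₂) : Prop :=
  Function.Surjective π.onV ∧
    ∀ v : G₁.V, Set.BijOn π.onE {e | G₁.s e = v} {e | G₂.s e = π.onV v}

/-- A closed path of length `n` in `G`: a cyclically composable sequence of `n` edges.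
Its base vertex is the source of its first edge; closed paths based at different vertices,
and distinct cyclic permutations, give distinct closed paths. -/
structure ClosedPath (G : Digraph') (n : ℕ) where
  e : Fin n → G.E
  chain : ∀ (i : ℕ) (h : i + 1 < n),
    G.t (e ⟨i, Nat.lt_of_succ_lt h⟩) = G.s (e ⟨i + 1, h⟩)
  closed : ∀ h : 0 < n, G.t (e ⟨n - 1, Nat.sub_lt h Nat.one_pos⟩) = G.s (e ⟨0, h⟩)

lemma ClosedPath.ext' {G : Digraph'} {n : ℕ} {γ δ : ClosedPath G n} (h : γ.e = δ.e) :
    γ = δ := by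
  cases γ; cases δ; cases h; rfl

/-- The image of a closed path under a graph map. -/
def GraphMap.mapPath {G₁ G₂ : Digraph'} (π : GraphMap G₁ G₂) {n : ℕ}
    (γ : ClosedPath G₁ n) : ClosedPath G₂ n where
  e i := π.onE (γ.e i)
  chain i h := by rw [π.ht, π.hs, γ.chain i h]
  closed h := by rw [π.ht, π.hs, γ.closed h]

lemma cyc_step {G : Digraph'} {n : ℕ} (γ : ClosedPath G n) (i i' : Fin n)
    (h : (i.val + 1) % n = i'.val) : G.t (γ.e i) = G.s (γ.e i') := by
  rcases lt_or_ge (i.val + 1) n with hlt | hge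
  · have h1 : i' = ⟨i.val + 1, hlt⟩ := Fin.ext (by rw [← h, Nat.mod_eq_of_lt hlt])
    rw [h1]
    have := γ.chain i.val hlt
    simpa using this
  · have hn : 0 < n := i.pos
    have hin : i.val + 1 = n := by omega
    have h0 : i'.val = 0 := by rw [← h, hin, Nat.mod_self]
    have h1 : i = ⟨n - 1, Nat.sub_lt hn Nat.one_pos⟩ := Fin.ext (show i.val = n - 1 by omega)
    have h2 : i' = ⟨0, hn⟩ := Fin.ext h0
    rw [h1, h2]
    exact γ.closed hn

/-- Let `π : Γ₁ → Γ₂` be a weak cover of graphs having finitely many closed paths of each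
length, and let `S` be a finite set of vertices of `Γ₁` met by every (nonempty) closed path
of `Γ₁`.  Then `C(Γ₁, n) ≤ n · #S · C(Γ₂, n)`. -/
theorem stmt_7 {G₁ G₂ : Digraph'} (π : GraphMap G₁ G₂) (hπ : IsWeakCover π)
    (hfin₁ : ∀ m : ℕ, Finite (ClosedPath G₁ m))
    (hfin₂ : ∀ m : ℕ, Finite (ClosedPath G₂ m))
    (S : Set G₁.V) (hS : S.Finite)
    (hmeet : ∀ (m : ℕ) (γ : ClosedPath G₁ m), 0 < m → ∃ i : Fin m, G₁.s (γ.e i) ∈ S)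
    (n : ℕ) (hn : 0 < n) :
    Nat.card (ClosedPath G₁ n) ≤ n * Nat.card S * Nat.card (ClosedPath G₂ n) := by
  classical
  haveI := hfin₂ n
  haveI : Finite S := hS.to_subtype
  set f : ClosedPath G₁ n → Fin n × S × ClosedPath G₂ n := fun γ =>
    ⟨(hmeet n γ hn).choose, ⟨G₁.s (γ.e (hmeet n γ hn).choose), (hmeet n γ hn).choose_spec⟩,
      π.mapPath γ⟩ with hf
  have finj : Function.Injective f := by
    intro γ δ h
    rw [hf] at h
    simp only [Prod.mk.injEq, Subtype.mk.injEq] at h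
    obtain ⟨hi, hv, himg⟩ := h
    set i : Fin n := (hmeet n γ hn).choose with hidef
    rw [← hi] at hv
    have hE : ∀ j : Fin n, π.onE (γ.e j) = π.onE (δ.e j) := by
      intro j
      exact congrFun (congrArg ClosedPath.e himg) j
    -- unique lifting along the cycle
    have key : ∀ k : ℕ, G₁.s (γ.e ⟨(i.val + k) % n, Nat.mod_lt _ hn⟩)
        = G₁.s (δ.e ⟨(i.val + k) % n, Nat.mod_lt _ hn⟩) ∧
        γ.e ⟨(i.val + k) % n, Nat.mod_lt _ hn⟩ = δ.e ⟨(i.val + k) % n, Nat.mod_lt _ hn⟩ := by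
      intro k
      induction k with
      | zero =>
        have h0 : (⟨(i.val + 0) % n, Nat.mod_lt _ hn⟩ : Fin n) = i :=
          Fin.ext (by simp [Nat.mod_eq_of_lt i.isLt])
        rw [h0]
        refine ⟨hv, ?_⟩
        have := (hπ.2 (G₁.s (γ.e i))).injOn rfl hv.symm (hE i)
        exact this
      | succ k ih =>
        obtain ⟨ihs, ihe⟩ := ih
        set j : Fin n := ⟨(i.val + k) % n, Nat.mod_lt _ hn⟩ with hj
        set j' : Fin n := ⟨(i.val + (k + 1)) % n, Nat.mod_lt _ hn⟩ with hj'
        have hmod : (j.val + 1) % n = j'.val := by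
          rw [hj, hj']
          simp only []
          rw [Nat.mod_add_mod, ← Nat.add_assoc]
        have hs' : G₁.s (γ.e j') = G₁.s (δ.e j') := by
          rw [← cyc_step γ j j' hmod, ← cyc_step δ j j' hmod, ihe]
        refine ⟨hs', ?_⟩
        exact (hπ.2 (G₁.s (γ.e j'))).injOn rfl hs'.symm (hE j')
    have edges : ∀ j : Fin n, γ.e j = δ.e j := by
      intro j
      have hk : (i.val + (n + j.val - i.val)) % n = j.val := by
        have h1 : i.val + (n + j.val - i.val) = n + j.val := by
          have := i.isLt; omega
        rw [h1, Nat.add_mod_left, Nat.mod_eq_of_lt j.isLt]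
      have := (key (n + j.val - i.val)).2
      have hjj : (⟨(i.val + (n + j.val - i.val)) % n, Nat.mod_lt _ hn⟩ : Fin n) = j :=
        Fin.ext hk
      rwa [hjj] at this
    exact ClosedPath.ext' (funext edges)
  calc Nat.card (ClosedPath G₁ n) ≤ Nat.card (Fin n × S × ClosedPath G₂ n) :=
        Nat.card_le_card_of_injective f finj
    _ = n * Nat.card S * Nat.card (ClosedPath G₂ n) := by
        simp [Nat.card_prod, mul_assoc]
end

section
/- In the graph associated to a labeled wedge, the support of every closed path of length n contains a vertex of the form (1, k) with 2 ≤ k ≤ n+1. -/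
/-- A labeled wedge: each pair `(i, j)` with `1 ≤ i < j` is labeled separated (`true`)
or non-separated (`false`). -/
abbrev WedgeLabeling := ℕ → ℕ → Bool

/-- A vertex of the wedge `Σ = {(i,j) : 1 ≤ i < j}`. -/
def ValidVertex (p : ℕ × ℕ) : Prop := 1 ≤ p.1 ∧ p.1 < p.2

/-- The edge relation of the graph associated to a labeled wedge: a non-separated vertex
`(i,j)` has a single (upward) edge to `(i+1, j+1)`; a separated vertex `(i,j)` has a
forward edge to `(1, j+1)` and a backward edge to `(1, i+1)`. -/
def WedgeStep (W : WedgeLabeling) (p q : ℕ × ℕ) : Prop :=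
  (W p.1 p.2 = false ∧ q = (p.1 + 1, p.2 + 1)) ∨
    (W p.1 p.2 = true ∧ (q = (1, p.2 + 1) ∨ q = (1, p.1 + 1)))

/-- `c 0, c 1, …, c n = c 0` is a closed path of length `n` in the graph associated to the
labeled wedge `W`. -/
def IsClosedWedgePath (W : WedgeLabeling) (n : ℕ) (c : ℕ → ℕ × ℕ) : Prop :=
  0 < n ∧ (∀ i ≤ n, ValidVertex (c i)) ∧ (∀ i < n, WedgeStep W (c i) (c (i + 1))) ∧ c n = c 0

/-- In the graph associated to a labeled wedge, the support of every closed path of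
length `n` contains a vertex of the form `(1, k)` with `2 ≤ k ≤ n + 1`. -/
theorem stmt_9 (W : WedgeLabeling) (n : ℕ) (c : ℕ → ℕ × ℕ)
    (hc : IsClosedWedgePath W n c) :
    ∃ i ≤ n, (c i).1 = 1 ∧ 2 ≤ (c i).2 ∧ (c i).2 ≤ n + 1 := by
  obtain ⟨hn, hval, hstep, hclose⟩ := hc
  -- each step increases the first coordinate by at most 1
  have h1 : ∀ k < n, (c (k + 1)).1 ≤ (c k).1 + 1 := by
    intro k hk
    rcases hstep k hk with ⟨_, hq⟩ | ⟨_, hq | hq⟩ <;> simp [hq]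
  -- growth lemma for the first coordinate
  have grow : ∀ i j, i ≤ j → j ≤ n → (c j).1 ≤ (c i).1 + (j - i) := by
    intro i j hij hjn
    induction j with
    | zero =>
      interval_cases i; simp
    | succ j ih =>
      rcases Nat.eq_or_lt_of_le hij with h | h
      · subst h; simp
      · have h2 := ih (Nat.lt_succ_iff.mp h) (le_of_lt hjn)
        have h3 := h1 j hjn
        omega
  -- there must be a backward step
  have hback : ∃ s < n, c (s + 1) = (1, (c s).1 + 1) := by
    by_contra hcon
    push_neg at hcon
    have hinc : ∀ k < n, (c (k + 1)).2 = (c k).2 + 1 := by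
      intro k hk
      rcases hstep k hk with ⟨_, hq⟩ | ⟨_, hq | hq⟩
      · simp [hq]
      · simp [hq]
      · exact absurd hq (hcon k hk)
    have hall : ∀ k ≤ n, (c k).2 = (c 0).2 + k := by
      intro k hk
      induction k with
      | zero => rfl
      | succ k ih =>
        have := hinc k (by omega)
        have := ih (by omega)
        omega
    have := hall n le_rfl
    have : (c n).2 = (c 0).2 := by rw [hclose]
    omega
  obtain ⟨s, hs, hq⟩ := hback
  refine ⟨s + 1, by omega, ?_, ?_, ?_⟩
  · simp [hq]
  · have := (hval s (by omega)).1
    simp [hq]; omega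
  · -- bound (c s).1 ≤ n
    have hs1 : (c (s + 1)).1 = 1 := by simp [hq]
    have hgn : (c n).1 ≤ (c (s + 1)).1 + (n - (s + 1)) := grow (s + 1) n (by omega) le_rfl
    have hcn : (c n).1 = (c 0).1 := by rw [hclose]
    have hgs : (c s).1 ≤ (c 0).1 + (s - 0) := grow 0 s (by omega) (by omega)
    simp [hq]
    omega
end

section
/- In the graph associated to a labeled wedge, every vertex on a closed path of length n has width at most 2n. -/
/-- In the graph associated to a labeled wedge, every vertex on a closed path of
length `n` has width at most `2n`. -/
theorem stmt_10 (W : WedgeLabeling) (n : ℕ) (c : ℕ → ℕ × ℕ)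
    (hc : IsClosedWedgePath W n c) : ∀ i ≤ n, (c i).2 ≤ 2 * n := by
  obtain ⟨hn, hvalid, hstep, hclose⟩ := hc
  have hstep2 : ∀ k < n, (c (k+1)).2 ≤ (c k).2 + 1 := by
    intro k hk
    have hv := hvalid k (le_of_lt hk)
    obtain ⟨hv1, hv2⟩ := hv
    rcases hstep k hk with ⟨_, hq⟩ | ⟨_, hq | hq⟩ <;> rw [hq] <;> simp <;> omega
  have hstep1 : ∀ k < n, (c (k+1)).1 ≤ (c k).1 + 1 := by
    intro k hk
    rcases hstep k hk with ⟨_, hq⟩ | ⟨_, hq | hq⟩ <;> rw [hq] <;> simp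
  have hj : ∀ d a, a + d ≤ n → (c (a + d)).2 ≤ (c a).2 + d := by
    intro d
    induction d with
    | zero => intro a _; simp
    | succ d ih =>
        intro a h
        have h1 := ih a (by omega)
        have h2 := hstep2 (a + d) (by omega)
        calc (c (a + (d+1))).2 = (c (a + d + 1)).2 := by ring_nf
          _ ≤ (c (a + d)).2 + 1 := h2
          _ ≤ (c a).2 + (d + 1) := by omega
  have hi : ∀ d a, a + d ≤ n → (c (a + d)).1 ≤ (c a).1 + d := by
    intro d
    induction d with
    | zero => intro a _; simp
    | succ d ih =>
        intro a h
        have h1 := ih a (by omega)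
        have h2 := hstep1 (a + d) (by omega)
        calc (c (a + (d+1))).1 = (c (a + d + 1)).1 := by ring_nf
          _ ≤ (c (a + d)).1 + 1 := h2
          _ ≤ (c a).1 + (d + 1) := by omega
  -- there is a backward step
  have ht : ∃ t, t < n ∧ (c (t+1)).1 = 1 ∧ (c (t+1)).2 = (c t).1 + 1 := by
    by_contra hcon
    push_neg at hcon
    have hall : ∀ k ≤ n, (c k).2 = (c 0).2 + k := by
      intro k hk
      induction k with
      | zero => simp
      | succ k ih =>
          have ihv := ih (by omega)
          have hkn : k < n := by omega
          have hv := hvalid k (le_of_lt hkn)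
          obtain ⟨hv1, hv2⟩ := hv
          rcases hstep k hkn with ⟨_, hq⟩ | ⟨_, hq | hq⟩
          · rw [hq]; simp; omega
          · rw [hq]; simp; omega
          · exfalso
            exact hcon k hkn (by rw [hq]) (by rw [hq])
    have h0 := hall n le_rfl
    rw [hclose] at h0
    omega
  obtain ⟨t, htn, ht1, ht2⟩ := ht
  -- (c t).1 ≤ n
  have hi0t : (c t).1 ≤ (c 0).1 + t := by
    have := hi t 0 (by omega)
    simpa using this
  have hin : (c n).1 ≤ 1 + (n - (t+1)) := by
    have := hi (n - (t+1)) (t+1) (by omega)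
    rw [show t + 1 + (n - (t+1)) = n from by omega, ht1] at this
    exact this
  have hitn : (c t).1 ≤ n := by
    rw [hclose] at hin
    omega
  -- width at t+1 is ≤ n+1
  have hwt : (c (t+1)).2 ≤ n + 1 := by omega
  -- width of c n
  have hjn : (c n).2 ≤ (c (t+1)).2 + (n - (t+1)) := by
    have := hj (n - (t+1)) (t+1) (by omega)
    rw [show t + 1 + (n - (t+1)) = n from by omega] at this
    exact this
  intro k hk
  rcases le_or_gt k t with hkt | hkt
  · have := hj k 0 (by omega)
    simp only [Nat.zero_add] at this
    rw [← hclose] at this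
    omega
  · have := hj (k - (t+1)) (t+1) (by omega)
    rw [show t + 1 + (k - (t+1)) = k from by omega] at this
    omega
end

section
/- In the graph associated to a labeled wedge, for each k ≥ 1 there is at most one separated vertex on the diagonal D_k = {(i,j) : j − i = k} that lies on some closed path; namely if (i₀, j₀) ∈ D_k is separated with minimal height, then no vertex (i₀ + t, j₀ + t) with t ≥ 1 lies on any closed path. -/
/-- On a closed path, every vertex has a predecessor. -/
lemma pred_exists (W : WedgeLabeling) (n : ℕ) (c : ℕ → ℕ × ℕ)
    (h : IsClosedWedgePath W n c) (i : ℕ) (hi : i ≤ n) :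
    ∃ j ≤ n, WedgeStep W (c j) (c i) := by
  obtain ⟨hn, _, hstep, hclose⟩ := h
  rcases Nat.eq_zero_or_pos i with rfl | hpos
  · refine ⟨n - 1, Nat.sub_le _ _, ?_⟩
    have := hstep (n - 1) (by omega)
    rwa [Nat.sub_add_cancel hn, hclose] at this
  · refine ⟨i - 1, by omega, ?_⟩
    have := hstep (i - 1) (by omega)
    rwa [Nat.sub_add_cancel hpos] at this

/-- In the graph associated to a labeled wedge, if `(i₀, j₀)` is a separated vertex, then
no vertex `(i₀ + t, j₀ + t)` with `t ≥ 1` on the same diagonal lies on any closed path.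
In particular, on each diagonal `D_k = {(i,j) : j − i = k}` at most one separated vertex
(the one of minimal height) can lie on a closed path. -/
theorem stmt_11 (W : WedgeLabeling) (i₀ j₀ : ℕ) (hval : ValidVertex (i₀, j₀))
    (hsep : W i₀ j₀ = true) (t : ℕ) (ht : 1 ≤ t) :
    ∀ (n : ℕ) (c : ℕ → ℕ × ℕ), IsClosedWedgePath W n c →
      ∀ i ≤ n, c i ≠ (i₀ + t, j₀ + t) := by
  obtain ⟨hi₀, hij⟩ := hval
  induction t, ht using Nat.le_induction with
  | base =>
    intro n c hpath i hi hci
    obtain ⟨j, hj, hstepj⟩ := pred_exists W n c hpath i hi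
    rw [hci] at hstepj
    rcases hstepj with ⟨hW, heq⟩ | ⟨_, heq | heq⟩
    · have h1 : (c j).1 = i₀ := by
        have := congrArg Prod.fst heq; simp at this; omega
      have h2 : (c j).2 = j₀ := by
        have := congrArg Prod.snd heq; simp at this; omega
      rw [h1, h2, hsep] at hW
      exact Bool.noConfusion hW
    · have := congrArg Prod.fst heq; simp at this; omega
    · have := congrArg Prod.fst heq; simp at this; omega
  | succ t ht ih =>
    intro n c hpath i hi hci
    obtain ⟨j, hj, hstepj⟩ := pred_exists W n c hpath i hi
    rw [hci] at hstepj
    rcases hstepj with ⟨hW, heq⟩ | ⟨_, heq | heq⟩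
    · have h1 : (c j).1 = i₀ + t := by
        have := congrArg Prod.fst heq; simp at this; omega
      have h2 : (c j).2 = j₀ + t := by
        have := congrArg Prod.snd heq; simp at this; omega
      exact ih n c hpath j hj (by rw [← h1, ← h2])
    · have := congrArg Prod.fst heq; simp at this; omega
    · have := congrArg Prod.fst heq; simp at this; omega
end

section
/- The number of multi-cycles of length n in the graph associated to a labeled wedge is at most (2n)^√(2n). -/
/-- A multi-cycle in the graph of a labeled wedge: a finite set `F` of vertices together
with a permutation `σ` of `F` (extended by the identity off `F`) each of whose moves is an
edge of the graph.  Its cycles are exactly finitely many simple cycles of the graph with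
pairwise disjoint supports, and its length is `F.card`. -/
def IsMultiCycle (W : WedgeLabeling) (F : Finset (ℕ × ℕ)) (σ : ℕ × ℕ → ℕ × ℕ) : Prop :=
  (∀ p ∈ F, ValidVertex p) ∧ Set.BijOn σ F F ∧ (∀ p ∈ F, WedgeStep W p (σ p)) ∧
    ∀ p ∉ F, σ p = p

namespace Wedge12

variable {W : WedgeLabeling} {F F' : Finset (ℕ × ℕ)} {σ σ' : ℕ × ℕ → ℕ × ℕ}

lemma valid_of_mem (h : IsMultiCycle W F σ) {p} (hp : p ∈ F) : 1 ≤ p.1 ∧ p.1 < p.2 :=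
  h.1 p hp

lemma sigma_mem (h : IsMultiCycle W F σ) {p} (hp : p ∈ F) : σ p ∈ F :=
  h.2.1.mapsTo hp

lemma step_false (h : IsMultiCycle W F σ) {p} (hp : p ∈ F) (hw : W p.1 p.2 = false) :
    σ p = (p.1 + 1, p.2 + 1) := by
  rcases h.2.2.1 p hp with h1 | h2
  · exact h1.2
  · rw [hw] at h2; simp at h2

lemma step_true (h : IsMultiCycle W F σ) {p} (hp : p ∈ F) (hw : W p.1 p.2 = true) :
    σ p = (1, p.2 + 1) ∨ σ p = (1, p.1 + 1) := by
  rcases h.2.2.1 p hp with h1 | h2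
  · rw [hw] at h1; simp at h1
  · exact h2.2

lemma pred (h : IsMultiCycle W F σ) {p} (hp : p ∈ F) : ∃ q ∈ F, σ q = p := by
  rcases h.2.1.surjOn hp with ⟨q, hq, hq2⟩
  exact ⟨q, hq, hq2⟩

lemma down (h : IsMultiCycle W F σ) {p} (hp : p ∈ F) (h2 : 2 ≤ p.1) :
    (p.1 - 1, p.2 - 1) ∈ F ∧ W (p.1 - 1) (p.2 - 1) = false ∧ σ (p.1 - 1, p.2 - 1) = p := by
  rcases pred h hp with ⟨q, hq, hq2⟩
  have hv := valid_of_mem h hq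
  rcases h.2.2.1 q hq with h1 | hh
  · rw [hq2] at h1
    have e1 : q.1 = p.1 - 1 := by rw [h1.2]; simp
    have e2 : q.2 = p.2 - 1 := by rw [h1.2]; simp
    have : (p.1 - 1, p.2 - 1) = q := by rw [← e1, ← e2]
    rw [this, hq2]
    refine ⟨hq, ?_, rfl⟩
    rw [e1, e2] at h1; exact h1.1
  · rw [hq2] at hh
    rcases hh.2 with h3 | h3 <;>
    · have : p.1 = 1 := by rw [h3]
      omega

lemma down_all (h : IsMultiCycle W F σ) {p} (hp : p ∈ F) :
    ∀ j, j ≤ p.1 - 1 →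
      (p.1 - j, p.2 - j) ∈ F ∧ (0 < j → W (p.1 - j) (p.2 - j) = false) := by
  have hv := valid_of_mem h hp
  intro j
  induction j with
  | zero => intro _; simpa using hp
  | succ j ih =>
    intro hj
    have hprev := ih (by omega)
    have h2 : 2 ≤ p.1 - j := by omega
    have := down h hprev.1 (by simpa using h2)
    have e1 : (p.1 - j) - 1 = p.1 - (j+1) := by omega
    have e2 : (p.2 - j) - 1 = p.2 - (j+1) := by omega
    rw [e1, e2] at this
    exact ⟨this.1, fun _ => this.2.1⟩

lemma down_all' (h : IsMultiCycle W F σ) {p} (hp : p ∈ F) {k} (h1 : 1 ≤ k) (h2 : k ≤ p.1) :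
    (k, k + (p.2 - p.1)) ∈ F ∧ (k < p.1 → W k (k + (p.2 - p.1)) = false) := by
  have hv := valid_of_mem h hp
  have := down_all h hp (p.1 - k) (by omega)
  have e1 : p.1 - (p.1 - k) = k := by omega
  have e2 : p.2 - (p.1 - k) = k + (p.2 - p.1) := by omega
  rw [e1, e2] at this
  exact ⟨this.1, fun hk => this.2 (by omega)⟩

lemma first_le_card (h : IsMultiCycle W F σ) {p} (hp : p ∈ F) : p.1 ≤ F.card := by
  have hv := valid_of_mem h hp
  have : (Finset.Icc 1 p.1).card ≤ F.card := by
    apply Finset.card_le_card_of_injOn (fun k => (k, k + (p.2 - p.1)))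
    · intro k hk
      rcases Finset.mem_Icc.mp hk with ⟨hk1, hk2⟩
      exact (down_all' h hp hk1 hk2).1
    · intro a _ b _ hab
      simpa using congrArg Prod.fst hab
  simpa using this

lemma exists_top_aux (h : IsMultiCycle W F σ) :
    ∀ m, ∀ p, p ∈ F → F.card - p.1 ≤ m →
      ∃ t ∈ F, W t.1 t.2 = true ∧ t.2 - t.1 = p.2 - p.1 ∧ p.1 ≤ t.1 := by
  intro m
  induction m with
  | zero =>
    intro p hp hm
    by_cases hw : W p.1 p.2 = true
    · exact ⟨p, hp, hw, rfl, le_refl _⟩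
    · exfalso
      have hw' : W p.1 p.2 = false := by simpa using hw
      have hs := step_false h hp hw'
      have hmem : σ p ∈ F := sigma_mem h hp
      rw [hs] at hmem
      have := first_le_card h hmem
      simp at this
      omega
  | succ m ih =>
    intro p hp hm
    by_cases hw : W p.1 p.2 = true
    · exact ⟨p, hp, hw, rfl, le_refl _⟩
    · have hw' : W p.1 p.2 = false := by simpa using hw
      have hs := step_false h hp hw'
      have hmem : σ p ∈ F := sigma_mem h hp
      rw [hs] at hmem
      have hv := valid_of_mem h hp
      rcases ih (p.1 + 1, p.2 + 1) hmem (by simp; omega) with ⟨t, ht, ht2, ht3, ht4⟩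
      refine ⟨t, ht, ht2, ?_, by simp at ht4; omega⟩
      simp at ht3
      omega

lemma exists_top (h : IsMultiCycle W F σ) {p} (hp : p ∈ F) :
    ∃ t ∈ F, W t.1 t.2 = true ∧ t.2 - t.1 = p.2 - p.1 ∧ p.1 ≤ t.1 :=
  exists_top_aux h F.card p hp (by omega)

/-- tops on the same diagonal coincide, even across two multicycles. -/
lemma top_unique (h : IsMultiCycle W F σ) (h' : IsMultiCycle W F' σ') {t t'}
    (ht : t ∈ F) (hs : W t.1 t.2 = true) (ht' : t' ∈ F') (hs' : W t'.1 t'.2 = true)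
    (hd : t.2 - t.1 = t'.2 - t'.1) : t = t' := by
  have hv := valid_of_mem h ht
  have hv' := valid_of_mem h' ht'
  rcases lt_trichotomy t.1 t'.1 with hlt | heq | hgt
  · exfalso
    have := (down_all' h' ht' (k := t.1) (by omega) (by omega)).2 hlt
    have e : t.1 + (t'.2 - t'.1) = t.2 := by omega
    rw [e] at this
    rw [this] at hs; simp at hs
  · have : t.2 = t'.2 := by omega
    exact Prod.ext heq this
  · exfalso
    have := (down_all' h ht (k := t'.1) (by omega) (by omega)).2 hgt
    have e : t'.1 + (t.2 - t.1) = t'.2 := by omega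
    rw [e] at this
    rw [this] at hs'; simp at hs'


/-! ### canonical top of a diagonal -/

noncomputable def runL (W : WedgeLabeling) (d : ℕ) : ℕ := sInf {k | 1 ≤ k ∧ W k (k + d) = true}

noncomputable def topOf (W : WedgeLabeling) (d : ℕ) : ℕ × ℕ := (runL W d, runL W d + d)

lemma top_eq (h : IsMultiCycle W F σ) {t} (ht : t ∈ F) (hs : W t.1 t.2 = true) :
    topOf W (t.2 - t.1) = t := by
  have hv := valid_of_mem h ht
  have hmem : t.1 ∈ {k | 1 ≤ k ∧ W k (k + (t.2 - t.1)) = true} := by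
    refine ⟨hv.1, ?_⟩
    have e : t.1 + (t.2 - t.1) = t.2 := by omega
    rw [e]; exact hs
  have h1 : runL W (t.2 - t.1) ≤ t.1 := Nat.sInf_le hmem
  have h2 : runL W (t.2 - t.1) ∈ {k | 1 ≤ k ∧ W k (k + (t.2 - t.1)) = true} :=
    Nat.sInf_mem ⟨t.1, hmem⟩
  have h3 : ¬ runL W (t.2 - t.1) < t.1 := by
    intro hlt
    have hw := (down_all' h ht (k := runL W (t.2 - t.1)) h2.1 (by omega)).2 hlt
    have h2' := h2.2
    rw [hw] at h2'; simp at h2'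
  have e1 : runL W (t.2 - t.1) = t.1 := by omega
  have e2 : runL W (t.2 - t.1) + (t.2 - t.1) = t.2 := by omega
  rw [topOf, e2, e1]

lemma top_mem (h : IsMultiCycle W F σ) {p} (hp : p ∈ F) :
    topOf W (p.2 - p.1) ∈ F ∧ W (topOf W (p.2 - p.1)).1 (topOf W (p.2 - p.1)).2 = true ∧
      p.1 ≤ (topOf W (p.2 - p.1)).1 ∧ (topOf W (p.2 - p.1)).2 - (topOf W (p.2 - p.1)).1 = p.2 - p.1 := by
  rcases exists_top h hp with ⟨t, ht, hs, hd, hle⟩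
  have he := top_eq h ht hs
  rw [hd] at he
  rw [he]
  exact ⟨ht, hs, hle, hd⟩

/-! ### the sets -/

def Vset (F : Finset (ℕ × ℕ)) : Finset (ℕ × ℕ) := F.filter (fun p => p.1 = 1)

noncomputable def Sset (W : WedgeLabeling) (F : Finset (ℕ × ℕ)) (σ : ℕ × ℕ → ℕ × ℕ) :
    Finset (ℕ × ℕ) :=
  F.filter (fun p => W p.1 p.2 = true ∧ σ p = (1, p.1 + 1))

noncomputable def code (W : WedgeLabeling) (F : Finset (ℕ × ℕ)) (σ : ℕ × ℕ → ℕ × ℕ) :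
    Finset ℕ := (Sset W F σ).image (fun p => p.2 - p.1)

noncomputable def nxt (W : WedgeLabeling) (σ : ℕ × ℕ → ℕ × ℕ) (v : ℕ × ℕ) : ℕ × ℕ :=
  σ (topOf W (v.2 - v.1))

lemma mem_Vset_base (h : IsMultiCycle W F σ) {p} (hp : p ∈ F) : (1, 1 + (p.2 - p.1)) ∈ Vset F := by
  have hv := valid_of_mem h hp
  have := (down_all' h hp (k := 1) le_rfl hv.1).1
  exact Finset.mem_filter.mpr ⟨this, rfl⟩

lemma vset_shape {v} (hv : v ∈ Vset F) : v.1 = 1 := (Finset.mem_filter.mp hv).2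

lemma vset_mem {v} (hv : v ∈ Vset F) : v ∈ F := (Finset.mem_filter.mp hv).1

lemma nxt_mem_Vset (h : IsMultiCycle W F σ) {v} (hv : v ∈ F) : nxt W σ v ∈ Vset F := by
  obtain ⟨ht, hs, -, -⟩ := top_mem h hv
  have hst := step_true h ht hs
  have hmem : σ (topOf W (v.2 - v.1)) ∈ F := sigma_mem h ht
  exact Finset.mem_filter.mpr ⟨hmem, by rcases hst with h1 | h1 <;> rw [nxt, h1]⟩

lemma nxt_inj (h : IsMultiCycle W F σ) {v v'} (hv : v ∈ Vset F) (hv' : v' ∈ Vset F)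
    (he : nxt W σ v = nxt W σ v') : v = v' := by
  obtain ⟨ht, hs, -, hd⟩ := top_mem h (vset_mem hv)
  obtain ⟨ht', hs', -, hd'⟩ := top_mem h (vset_mem hv')
  have heq : topOf W (v.2 - v.1) = topOf W (v'.2 - v'.1) :=
    h.2.1.injOn ht ht' he
  have : v.2 - v.1 = v'.2 - v'.1 := by rw [← hd, ← hd', heq]
  have h1 := vset_shape hv
  have h2 := vset_shape hv'
  have hv1 := valid_of_mem h (vset_mem hv)
  have hv2 := valid_of_mem h (vset_mem hv')
  have : v.2 = v'.2 := by omega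
  exact Prod.ext (by omega) this


/-! ### sum identities -/

noncomputable abbrev bwdP (W : WedgeLabeling) (σ : ℕ × ℕ → ℕ × ℕ) (v : ℕ × ℕ) : Prop :=
  σ (topOf W (v.2 - v.1)) = (1, (topOf W (v.2 - v.1)).1 + 1)

lemma fiber_eq (h : IsMultiCycle W F σ) {v} (hv : v ∈ Vset F) :
    F.filter (fun p => (1, 1 + (p.2 - p.1)) = v)
      = (Finset.Icc 1 (topOf W (v.2 - v.1)).1).image (fun k => (k, k + (v.2 - v.1))) := by
  have hvv := valid_of_mem h (vset_mem hv)
  have h1 := vset_shape hv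
  obtain ⟨hT, hTs, hTle, hTd⟩ := top_mem h (vset_mem hv)
  apply Finset.ext
  intro p
  constructor
  · intro hp
    rcases Finset.mem_filter.mp hp with ⟨hpF, hpc⟩
    have hpv := valid_of_mem h hpF
    have hd : p.2 - p.1 = v.2 - v.1 := by
      have := congrArg Prod.snd hpc
      simp at this
      omega
    obtain ⟨hT', hTs', hTle', hTd'⟩ := top_mem h hpF
    rw [hd] at hTle'
    refine Finset.mem_image.mpr ⟨p.1, Finset.mem_Icc.mpr ⟨hpv.1, hTle'⟩, ?_⟩
    rw [← hd]
    exact Prod.ext rfl (by omega)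
  · intro hp
    rcases Finset.mem_image.mp hp with ⟨k, hk, hkp⟩
    rcases Finset.mem_Icc.mp hk with ⟨hk1, hk2⟩
    have hmem := (down_all' h hT hk1 hk2).1
    rw [hTd] at hmem
    rw [← hkp]
    refine Finset.mem_filter.mpr ⟨hmem, ?_⟩
    refine Prod.ext (by simp [h1]) ?_
    simp
    omega

lemma card_eq_sum_top (h : IsMultiCycle W F σ) :
    F.card = ∑ v ∈ Vset F, (topOf W (v.2 - v.1)).1 := by
  rw [Finset.card_eq_sum_card_fiberwise (f := fun p => (1, 1 + (p.2 - p.1))) (t := Vset F)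
    (fun p hp => mem_Vset_base h hp)]
  apply Finset.sum_congr rfl
  intro v hv
  rw [fiber_eq h hv, Finset.card_image_of_injOn, Nat.card_Icc]
  · omega
  · intro a _ b _ hab
    simpa using congrArg Prod.fst hab

lemma sum_reindex (h : IsMultiCycle W F σ) :
    ∑ v ∈ Vset F, ((nxt W σ v).2 - 1) = ∑ v ∈ Vset F, (v.2 - 1) := by
  apply Finset.sum_bij (i := fun v _ => nxt W σ v)
  · intro v hv; exact nxt_mem_Vset h (vset_mem hv)
  · intro a ha b hb hab; exact nxt_inj h ha hb hab
  · intro w hw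
    have := Finset.surj_on_of_inj_on_of_card_le (s := Vset F) (t := Vset F)
      (f := fun v _ => nxt W σ v) (fun v hv => nxt_mem_Vset h (vset_mem hv))
      (fun a b ha hb hab => nxt_inj h ha hb hab) le_rfl w hw
    rcases this with ⟨v, hv, hveq⟩
    exact ⟨v, hv, hveq.symm⟩
  · intro v hv; rfl

lemma nxt_snd (h : IsMultiCycle W F σ) {v} (hv : v ∈ Vset F) :
    (nxt W σ v).2 - 1 =
      (topOf W (v.2 - v.1)).1 + (if bwdP W σ v then 0 else v.2 - 1) := by
  classical
  have hvv := valid_of_mem h (vset_mem hv)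
  have h1 := vset_shape hv
  obtain ⟨hT, hTs, hTle, hTd⟩ := top_mem h (vset_mem hv)
  have hTv := valid_of_mem h hT
  rcases step_true h hT hTs with hf | hb
  · have hnb : ¬ bwdP W σ v := by
      rw [bwdP, hf]
      intro hc
      have := congrArg Prod.snd hc
      simp at this
      omega
    rw [if_neg hnb, nxt, hf]
    simp
    omega
  · have hbb : bwdP W σ v := hb
    rw [if_pos hbb, nxt, hb]
    simp

lemma sum_bwd_eq_card (h : IsMultiCycle W F σ) :
    ∑ v ∈ (Vset F).filter (fun v => bwdP W σ v), (v.2 - 1) = F.card := by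
  classical
  have e1 : ∑ v ∈ Vset F, ((nxt W σ v).2 - 1)
      = ∑ v ∈ Vset F, ((topOf W (v.2 - v.1)).1 + (if bwdP W σ v then 0 else v.2 - 1)) :=
    Finset.sum_congr rfl (fun v hv => nxt_snd h hv)
  rw [sum_reindex h] at e1
  rw [Finset.sum_add_distrib] at e1
  have e2 : ∑ v ∈ Vset F, (if bwdP W σ v then 0 else v.2 - 1)
      = ∑ v ∈ (Vset F).filter (fun v => ¬ bwdP W σ v), (v.2 - 1) := by
    rw [Finset.sum_ite]
    simp
  rw [e2] at e1
  have e3 : ∑ v ∈ Vset F, (v.2 - 1)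
      = ∑ v ∈ (Vset F).filter (fun v => bwdP W σ v), (v.2 - 1)
        + ∑ v ∈ (Vset F).filter (fun v => ¬ bwdP W σ v), (v.2 - 1) :=
    (Finset.sum_filter_add_sum_filter_not _ _ _).symm
  rw [e3] at e1
  have := card_eq_sum_top h
  omega

/-! ### the code: sum and bounds -/

lemma mem_Sset {p} : p ∈ Sset W F σ ↔ p ∈ F ∧ (W p.1 p.2 = true ∧ σ p = (1, p.1 + 1)) :=
  Finset.mem_filter

lemma sep_unique (h : IsMultiCycle W F σ) {p p'} (hp : p ∈ Sset W F σ) (hp' : p' ∈ Sset W F σ)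
    (hd : p.2 - p.1 = p'.2 - p'.1) : p = p' := by
  rcases mem_Sset.mp hp with ⟨h1, h2, -⟩
  rcases mem_Sset.mp hp' with ⟨h1', h2', -⟩
  exact top_unique h h h1 h2 h1' h2' hd

lemma sum_Sset_eq (h : IsMultiCycle W F σ) :
    ∑ p ∈ Sset W F σ, (p.2 - p.1) = ∑ v ∈ (Vset F).filter (fun v => bwdP W σ v), (v.2 - 1) := by
  classical
  apply Finset.sum_bij (i := fun p _ => ((1, 1 + (p.2 - p.1)) : ℕ × ℕ))
  · intro p hp
    rcases mem_Sset.mp hp with ⟨h1, h2, h3⟩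
    refine Finset.mem_filter.mpr ⟨mem_Vset_base h h1, ?_⟩
    have hd : ((1:ℕ), 1 + (p.2 - p.1)).2 - ((1:ℕ), 1 + (p.2 - p.1)).1 = p.2 - p.1 := by simp
    rw [bwdP, hd, top_eq h h1 h2, h3]
  · intro a ha b hb hab
    have := congrArg Prod.snd hab
    simp at this
    exact sep_unique h ha hb this
  · intro v hv
    rcases Finset.mem_filter.mp hv with ⟨hv1, hv2⟩
    have hvv := valid_of_mem h (vset_mem hv1)
    have h1 := vset_shape hv1
    obtain ⟨hT, hTs, hTle, hTd⟩ := top_mem h (vset_mem hv1)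
    refine ⟨topOf W (v.2 - v.1), mem_Sset.mpr ⟨hT, hTs, hv2⟩, ?_⟩
    rw [hTd]
    have : 1 + (v.2 - v.1) = v.2 := by omega
    rw [this]
    apply Prod.ext <;> simp [h1]
  · intro p hp
    simp

lemma sum_code (h : IsMultiCycle W F σ) : ∑ a ∈ code W F σ, a = F.card := by
  classical
  rw [code, Finset.sum_image (fun p hp p' hp' he => sep_unique h hp hp' he),
    sum_Sset_eq h, sum_bwd_eq_card h]

lemma code_subset (h : IsMultiCycle W F σ) : code W F σ ⊆ Finset.Icc 1 F.card := by
  intro a ha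
  rcases Finset.mem_image.mp ha with ⟨p, hp, hpa⟩
  have hv := valid_of_mem h (mem_Sset.mp hp).1
  refine Finset.mem_Icc.mpr ⟨by omega, ?_⟩
  rw [← sum_code h]
  exact Finset.single_le_sum (f := fun a => a) (fun _ _ => Nat.zero_le _) ha

lemma sum_distinct : ∀ (k : ℕ) (A : Finset ℕ), A.card = k → (∀ a ∈ A, 1 ≤ a) →
    A.card * (A.card + 1) ≤ 2 * ∑ a ∈ A, a := by
  intro k
  induction k with
  | zero =>
    intro A hA _
    simp [hA]
  | succ k ih =>
    intro A hA h1
    have hne : A.Nonempty := Finset.card_pos.mp (by omega)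
    set m := A.max' hne with hm
    have hmA : m ∈ A := A.max'_mem hne
    have hsub : A ⊆ Finset.Icc 1 m := by
      intro a ha
      exact Finset.mem_Icc.mpr ⟨h1 a ha, A.le_max' a ha⟩
    have hcard : A.card ≤ m := by
      have := Finset.card_le_card hsub
      simpa using this
    have herase : (A.erase m).card = k := by
      rw [Finset.card_erase_of_mem hmA, hA]
      omega
    have ihe := ih (A.erase m) herase (fun a ha => h1 a (Finset.erase_subset _ _ ha))
    rw [herase] at ihe
    have hsum : m + ∑ a ∈ A.erase m, a = ∑ a ∈ A, a :=
      Finset.add_sum_erase A (fun a => a) hmA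
    rw [hA]
    have expand : (k+1) * (k+1+1) = k * (k+1) + 2*(k+1) := by ring
    rw [expand]
    have : k * (k+1) + 2*(k+1) ≤ 2 * (∑ a ∈ A.erase m, a) + 2 * m :=
      add_le_add ihe (by omega)
    omega

lemma card_code (h : IsMultiCycle W F σ) :
    (code W F σ).card * ((code W F σ).card + 1) ≤ 2 * F.card := by
  have := sum_distinct (code W F σ).card (code W F σ) rfl (fun a ha => by
    rcases Finset.mem_image.mp ha with ⟨p, hp, hpa⟩
    have hv := valid_of_mem h (mem_Sset.mp hp).1
    omega)
  rw [sum_code h] at this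
  exact this

/-! ### injectivity of the code -/

lemma Sset_transfer (h : IsMultiCycle W F σ) (h' : IsMultiCycle W F' σ')
    (hc : code W F σ = code W F' σ') : Sset W F σ ⊆ Sset W F' σ' := by
  intro t ht
  rcases mem_Sset.mp ht with ⟨h1, h2, h3⟩
  have : t.2 - t.1 ∈ code W F' σ' := by
    rw [← hc]
    exact Finset.mem_image_of_mem _ ht
  rcases Finset.mem_image.mp this with ⟨p', hp', hdp⟩
  rcases mem_Sset.mp hp' with ⟨h1', h2', h3'⟩
  have : p' = t := top_unique h' h h1' h2' h1 h2 hdp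
  rw [← this]
  exact hp'

lemma Sset_eq (h : IsMultiCycle W F σ) (h' : IsMultiCycle W F' σ')
    (hc : code W F σ = code W F' σ') : Sset W F σ = Sset W F' σ' :=
  le_antisymm (Sset_transfer h h' hc) (Sset_transfer h' h hc.symm)

lemma transfer_step (h : IsMultiCycle W F σ) (h' : IsMultiCycle W F' σ')
    (hc : code W F σ = code W F' σ') {v} (hv : v ∈ Vset F)
    (hor : bwdP W σ v ∨ v ∈ F') : nxt W σ v ∈ F' := by
  classical
  have hS := Sset_eq h h' hc
  obtain ⟨hT, hTs, hTle, hTd⟩ := top_mem h (vset_mem hv)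
  by_cases hb : bwdP W σ v
  · -- backward jump: top is in Sset = Sset', so σ' does the same jump
    have hTS : topOf W (v.2 - v.1) ∈ Sset W F σ := mem_Sset.mpr ⟨hT, hTs, hb⟩
    rw [hS] at hTS
    rcases mem_Sset.mp hTS with ⟨h1', h2', h3'⟩
    have : nxt W σ v = σ' (topOf W (v.2 - v.1)) := by rw [nxt, hb, h3']
    rw [this]
    exact sigma_mem h' h1'
  · -- forward jump
    rcases hor with hb' | hvF'
    · exact absurd hb' hb
    obtain ⟨hT', hTs', -, -⟩ := top_mem h' hvF'
    have hσ : σ (topOf W (v.2 - v.1)) = (1, (topOf W (v.2 - v.1)).2 + 1) := by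
      rcases step_true h hT hTs with he | he
      · exact he
      · exact absurd he hb
    have hσ' : σ' (topOf W (v.2 - v.1)) = (1, (topOf W (v.2 - v.1)).2 + 1) := by
      rcases step_true h' hT' hTs' with he | he
      · exact he
      · exfalso
        have : topOf W (v.2 - v.1) ∈ Sset W F' σ' := mem_Sset.mpr ⟨hT', hTs', he⟩
        rw [← hS] at this
        exact hb (mem_Sset.mp this).2.2
    have : nxt W σ v = σ' (topOf W (v.2 - v.1)) := by rw [nxt, hσ, hσ']
    rw [this]
    exact sigma_mem h' hT'

lemma iter_mem_Vset (h : IsMultiCycle W F σ) {v} (hv : v ∈ Vset F) :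
    ∀ i, (nxt W σ)^[i] v ∈ Vset F := by
  intro i
  induction i with
  | zero => simpa using hv
  | succ i ih =>
    rw [Function.iterate_succ_apply']
    exact nxt_mem_Vset h (vset_mem ih)

lemma nxt_grow (h : IsMultiCycle W F σ) {v} (hv : v ∈ Vset F) (hb : ¬ bwdP W σ v) :
    v.2 + 1 ≤ (nxt W σ v).2 := by
  classical
  have := nxt_snd h hv
  rw [if_neg hb] at this
  obtain ⟨hT, hTs, hTle, hTd⟩ := top_mem h (vset_mem hv)
  have hTv := valid_of_mem h hT
  have hvv := valid_of_mem h (vset_mem hv)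
  have hnv := valid_of_mem h (vset_mem (nxt_mem_Vset h (vset_mem hv)))
  omega

lemma vset_subset (h : IsMultiCycle W F σ) (h' : IsMultiCycle W F' σ')
    (hc : code W F σ = code W F' σ') {v₀} (hv₀ : v₀ ∈ Vset F) : v₀ ∈ F' := by
  classical
  -- permutation of Vset F induced by nxt
  let α := {x // x ∈ Vset F}
  let e : α → α := fun x => ⟨nxt W σ x.1, nxt_mem_Vset h (vset_mem x.2)⟩
  have einj : Function.Injective e := by
    intro a b hab
    have : nxt W σ a.1 = nxt W σ b.1 := congrArg Subtype.val hab
    exact Subtype.ext (nxt_inj h a.2 b.2 this)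
  let P : Equiv.Perm α := Equiv.ofBijective e (Finite.injective_iff_bijective.mp einj)
  have hseq : ∀ (k : ℕ) (x : α), ((P ^ k) x : ℕ × ℕ) = (nxt W σ)^[k] x.1 := by
    intro k
    induction k with
    | zero => intro x; simp
    | succ k ih =>
      intro x
      have h1 : (P ^ (k+1)) x = P ((P ^ k) x) := by rw [pow_succ']; rfl
      rw [h1, Function.iterate_succ_apply']
      have h2 : (P ((P ^ k) x) : ℕ × ℕ) = nxt W σ ((P ^ k) x : ℕ × ℕ) := rfl
      rw [h2, ih]
  set c := orderOf P with hcdef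
  have hc0 : 0 < c := orderOf_pos P
  have hcyc : (nxt W σ)^[c] v₀ = v₀ := by
    have : (P ^ c) ⟨v₀, hv₀⟩ = ⟨v₀, hv₀⟩ := by
      rw [hcdef, pow_orderOf_eq_one]; rfl
    have h2 := hseq c ⟨v₀, hv₀⟩
    rw [this] at h2
    exact h2.symm
  -- there is a backward step within the cycle
  have hexists : ∃ i < c, bwdP W σ ((nxt W σ)^[i] v₀) := by
    by_contra hno
    push_neg at hno
    have hgrow : ∀ i ≤ c, v₀.2 + i ≤ ((nxt W σ)^[i] v₀).2 := by
      intro i hi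
      induction i with
      | zero => simp
      | succ i ih =>
        have hlt : i < c := by omega
        have h1 := ih (by omega)
        have h2 := nxt_grow h (iter_mem_Vset h hv₀ i) (hno i hlt)
        rw [Function.iterate_succ_apply']
        omega
    have := hgrow c le_rfl
    rw [hcyc] at this
    omega
  rcases hexists with ⟨i₀, hi₀, hbwd⟩
  -- from the backward step on, everything lands in F'
  have hchain : ∀ j, (nxt W σ)^[i₀ + 1 + j] v₀ ∈ F' := by
    intro j
    induction j with
    | zero =>
      have : i₀ + 1 + 0 = i₀ + 1 := by omega
      rw [this, Function.iterate_succ_apply']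
      exact transfer_step h h' hc (iter_mem_Vset h hv₀ i₀) (Or.inl hbwd)
    | succ j ih =>
      have : i₀ + 1 + (j + 1) = (i₀ + 1 + j) + 1 := by omega
      rw [this, Function.iterate_succ_apply']
      exact transfer_step h h' hc (iter_mem_Vset h hv₀ (i₀ + 1 + j)) (Or.inr ih)
  have := hchain (c - i₀ - 1)
  have he : i₀ + 1 + (c - i₀ - 1) = c := by omega
  rw [he, hcyc] at this
  exact this

lemma F_subset (h : IsMultiCycle W F σ) (h' : IsMultiCycle W F' σ')
    (hc : code W F σ = code W F' σ') : F ⊆ F' := by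
  intro p hp
  have hv := valid_of_mem h hp
  have hvmem : (1, 1 + (p.2 - p.1)) ∈ Vset F := mem_Vset_base h hp
  have hvF' : ((1:ℕ), 1 + (p.2 - p.1)) ∈ F' := vset_subset h h' hc hvmem
  obtain ⟨hT, hTs, hTle, hTd⟩ := top_mem h hp
  have hd : ((1:ℕ), 1 + (p.2 - p.1)).2 - ((1:ℕ), 1 + (p.2 - p.1)).1 = p.2 - p.1 := by simp
  obtain ⟨hT', hTs', -, -⟩ := top_mem h' hvF'
  rw [hd] at hT' hTs'
  have hT'' : topOf W (p.2 - p.1) ∈ F' := hT'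
  have := (down_all' h' hT'' (k := p.1) hv.1 (by omega)).1
  rw [hTd] at this
  have he : (p.1, p.1 + (p.2 - p.1)) = p := Prod.ext rfl (by omega)
  rw [he] at this
  exact this

lemma code_inj (h : IsMultiCycle W F σ) (h' : IsMultiCycle W F' σ')
    (hc : code W F σ = code W F' σ') : F = F' ∧ σ = σ' := by
  have hF : F = F' := le_antisymm (F_subset h h' hc) (F_subset h' h hc.symm)
  refine ⟨hF, funext fun p => ?_⟩
  by_cases hp : p ∈ F
  · have hp' : p ∈ F' := hF ▸ hp
    have hS := Sset_eq h h' hc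
    cases hw : W p.1 p.2 with
    | false => rw [step_false h hp hw, step_false h' hp' hw]
    | true =>
      by_cases hb : σ p = (1, p.1 + 1)
      · have : p ∈ Sset W F σ := mem_Sset.mpr ⟨hp, hw, hb⟩
        rw [hS] at this
        rw [hb, (mem_Sset.mp this).2.2]
      · have hσ : σ p = (1, p.2 + 1) := by
          rcases step_true h hp hw with he | he
          · exact he
          · exact absurd he hb
        have hσ' : σ' p = (1, p.2 + 1) := by
          rcases step_true h' hp' hw with he | he
          · exact he
          · exfalso
            have : p ∈ Sset W F' σ' := mem_Sset.mpr ⟨hp', hw, he⟩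
            rw [← hS] at this
            exact hb (mem_Sset.mp this).2.2
        rw [hσ, hσ']
  · have hp' : p ∉ F' := hF ▸ hp
    rw [h.2.2.2 p hp, h'.2.2.2 p hp']

lemma choose_le_pow (n : ℕ) : ∀ m : ℕ, n.choose m ≤ n ^ m := by
  intro m
  induction m with
  | zero => simp
  | succ m ih =>
    have h1 : n.choose (m+1) ≤ n.choose (m+1) * (m+1) := Nat.le_mul_of_pos_right _ (by omega)
    have h2 : n.choose (m+1) * (m+1) = n.choose m * (n - m) := Nat.choose_succ_right_eq n m
    have h3 : n.choose m * (n - m) ≤ n ^ m * n := Nat.mul_le_mul ih (by omega)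
    calc n.choose (m+1) ≤ n.choose (m+1) * (m+1) := h1
      _ = n.choose m * (n - m) := h2
      _ ≤ n ^ m * n := h3
      _ = n ^ (m+1) := (pow_succ n m).symm

end Wedge12

/-- The number of multi-cycles of length `n` in the graph associated to a labeled wedge
is at most `(2n)^√(2n)`. -/
theorem stmt_12 (W : WedgeLabeling) (n : ℕ) (hn : 0 < n) :
    (Nat.card {x : Finset (ℕ × ℕ) × (ℕ × ℕ → ℕ × ℕ) //
        IsMultiCycle W x.1 x.2 ∧ x.1.card = n} : ℝ) ≤
      (2 * n : ℝ) ^ Real.sqrt (2 * n) := by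
  classical
  set M := Nat.sqrt (2 * n) with hM
  set target : Finset (Finset ℕ) :=
    ((Finset.Icc 1 n).powerset).filter (fun A => A.card * (A.card + 1) ≤ 2 * n) with htarget
  -- Step 1: inject multicycles into `target` via their code
  have key : Nat.card {x : Finset (ℕ × ℕ) × (ℕ × ℕ → ℕ × ℕ) //
      IsMultiCycle W x.1 x.2 ∧ x.1.card = n} ≤ target.card := by
    have hcoe : Nat.card {A // A ∈ target} = target.card := by simp
    rw [← hcoe]
    have hmem : ∀ x : {x : Finset (ℕ × ℕ) × (ℕ × ℕ → ℕ × ℕ) //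
        IsMultiCycle W x.1 x.2 ∧ x.1.card = n}, Wedge12.code W x.val.1 x.val.2 ∈ target := by
      intro x
      rcases x.prop with ⟨hmc, hcard⟩
      refine Finset.mem_filter.mpr ⟨Finset.mem_powerset.mpr ?_, ?_⟩
      · have := Wedge12.code_subset hmc
        rwa [hcard] at this
      · have := Wedge12.card_code hmc
        rwa [hcard] at this
    apply Nat.card_le_card_of_injective
      (fun x : {x : Finset (ℕ × ℕ) × (ℕ × ℕ → ℕ × ℕ) //
        IsMultiCycle W x.1 x.2 ∧ x.1.card = n} =>
        (⟨Wedge12.code W x.val.1 x.val.2, hmem x⟩ : {A // A ∈ target}))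
    intro x y hxy
    have hcode : Wedge12.code W x.val.1 x.val.2 = Wedge12.code W y.val.1 y.val.2 :=
      congrArg Subtype.val hxy
    have := Wedge12.code_inj x.prop.1 y.prop.1 hcode
    exact Subtype.ext (Prod.ext this.1 this.2)
  -- Step 2: bound target.card
  have hbound : target.card ≤ (M + 1) * n ^ M := by
    have h1 : target ⊆ (Finset.range (M+1)).biUnion
        (fun m => (Finset.Icc 1 n).powersetCard m) := by
      intro A hA
      rcases Finset.mem_filter.mp hA with ⟨hA1, hA2⟩
      have hsub := Finset.mem_powerset.mp hA1
      have hcard : A.card ≤ M := by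
        rw [hM, Nat.le_sqrt]
        calc A.card * A.card ≤ A.card * (A.card + 1) := Nat.mul_le_mul_left _ (by omega)
          _ ≤ 2 * n := hA2
      exact Finset.mem_biUnion.mpr ⟨A.card, Finset.mem_range.mpr (by omega),
        Finset.mem_powersetCard.mpr ⟨hsub, rfl⟩⟩
    calc target.card ≤ ((Finset.range (M+1)).biUnion
          (fun m => (Finset.Icc 1 n).powersetCard m)).card := Finset.card_le_card h1
      _ ≤ ∑ m ∈ Finset.range (M+1), ((Finset.Icc 1 n).powersetCard m).card :=
          Finset.card_biUnion_le
      _ ≤ ∑ m ∈ Finset.range (M+1), n ^ M := by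
          apply Finset.sum_le_sum
          intro m hm
          rw [Finset.card_powersetCard, Nat.card_Icc]
          calc (n + 1 - 1).choose m ≤ (n + 1 - 1) ^ m := Wedge12.choose_le_pow _ m
            _ = n ^ m := by norm_num
            _ ≤ n ^ M := Nat.pow_le_pow_right hn (Finset.mem_range.mp hm |> Nat.lt_succ_iff.mp)
      _ = (M + 1) * n ^ M := by rw [Finset.sum_const, Finset.card_range, smul_eq_mul]
  have hbound2 : target.card ≤ (2 * n) ^ M := by
    calc target.card ≤ (M + 1) * n ^ M := hbound
      _ ≤ 2 ^ M * n ^ M := Nat.mul_le_mul_right _ (Nat.lt_two_pow_self (n := M))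
      _ = (2 * n) ^ M := (mul_pow 2 n M).symm
  -- Step 3: pass to the reals
  have hnat : Nat.card {x : Finset (ℕ × ℕ) × (ℕ × ℕ → ℕ × ℕ) //
      IsMultiCycle W x.1 x.2 ∧ x.1.card = n} ≤ (2 * n) ^ M := le_trans key hbound2
  have hle : (Nat.card {x : Finset (ℕ × ℕ) × (ℕ × ℕ → ℕ × ℕ) //
      IsMultiCycle W x.1 x.2 ∧ x.1.card = n} : ℝ) ≤ ((2 * n : ℕ) ^ M : ℕ) := by
    exact_mod_cast hnat
  apply le_trans hle
  have hcast : (((2 * n : ℕ) ^ M : ℕ) : ℝ) = (2 * (n:ℝ)) ^ (M : ℕ) := by push_cast; ring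
  rw [hcast, ← Real.rpow_natCast (2 * (n:ℝ)) M]
  apply Real.rpow_le_rpow_of_exponent_le
  · have : (1:ℝ) ≤ (n:ℝ) := by exact_mod_cast hn
    linarith
  · rw [Real.le_sqrt (by positivity) (by positivity)]
    have h1 : (M * M : ℕ) ≤ 2 * n := Nat.sqrt_le (2 * n)
    have : ((M * M : ℕ) : ℝ) ≤ ((2 * n : ℕ) : ℝ) := by exact_mod_cast h1
    push_cast at this
    nlinarith [this]
end

section
/- The graph associated to any labeled wedge has bounded cycles: its outgoing degree is at most 2, and for each n it has only finitely many simple cycles of length n. -/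
/-- The graph associated to any labeled wedge has bounded cycles: every vertex has
outgoing degree at most `2`, and for each `n` there are only finitely many simple cycles
of length `n` (closed paths with pairwise distinct vertices, here described by a cyclic
sequence `c : Fin n → Σ`). -/
theorem stmt_13 (W : WedgeLabeling) :
    (∀ p : ℕ × ℕ, ValidVertex p → Nat.card {q : ℕ × ℕ // WedgeStep W p q} ≤ 2) ∧
      ∀ n : ℕ, {c : Fin n → ℕ × ℕ | Function.Injective c ∧
        (∀ i, ValidVertex (c i)) ∧ ∀ i : Fin n, WedgeStep W (c i) (c ⟨((i : ℕ) + 1) % n, Nat.mod_lt _ i.pos⟩)}.Finite := by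
  constructor
  · -- out-degree at most 2
    intro p hp
    have hcard : Nat.card {q : ℕ × ℕ // WedgeStep W p q}
        = Set.ncard {q : ℕ × ℕ | WedgeStep W p q} := rfl
    rw [hcard]
    cases hW : W p.1 p.2 with
    | false =>
      have hsub : {q : ℕ × ℕ | WedgeStep W p q} ⊆ {(p.1 + 1, p.2 + 1)} := by
        rintro q (⟨-, hq⟩ | ⟨h, -⟩)
        · simp [hq]
        · rw [hW] at h; exact absurd h (by simp)
      calc Set.ncard {q : ℕ × ℕ | WedgeStep W p q}
          ≤ Set.ncard ({(p.1 + 1, p.2 + 1)} : Set (ℕ × ℕ)) :=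
            Set.ncard_le_ncard hsub (Set.finite_singleton _)
        _ ≤ 2 := by rw [Set.ncard_singleton]; omega
    | true =>
      have hsub : {q : ℕ × ℕ | WedgeStep W p q} ⊆
          insert (1, p.2 + 1) {(1, p.1 + 1)} := by
        rintro q (⟨h, -⟩ | ⟨-, hq | hq⟩)
        · rw [hW] at h; exact absurd h (by simp)
        · simp [hq]
        · simp [hq]
      calc Set.ncard {q : ℕ × ℕ | WedgeStep W p q}
          ≤ Set.ncard (insert ((1 : ℕ), p.2 + 1) {((1 : ℕ), p.1 + 1)}) :=
            Set.ncard_le_ncard hsub (by simp)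
        _ ≤ Set.ncard ({((1 : ℕ), p.1 + 1)} : Set (ℕ × ℕ)) + 1 := Set.ncard_insert_le _ _
        _ ≤ 2 := by rw [Set.ncard_singleton]
  · -- finitely many simple cycles of length n
    intro n
    rcases Nat.eq_zero_or_pos n with rfl | hn
    · have : Subsingleton (Fin 0 → ℕ × ℕ) := ⟨fun f g => funext fun i => i.elim0⟩
      exact Set.subsingleton_of_subsingleton.finite
    -- main case
    apply Set.Finite.subset
      (Set.Finite.pi (fun _ : Fin n =>
        ((Set.finite_Iic (3 * n + 1)).prod (Set.finite_Iic (3 * n + 1)))))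
    rintro c ⟨hinj, hval, hstep⟩
    -- periodic extension
    set d : ℕ → ℕ × ℕ := fun i => c ⟨i % n, Nat.mod_lt _ hn⟩ with hd
    have hdc : ∀ i : Fin n, d i.val = c i := by
      intro i
      simp only [hd]
      congr 1
      exact Fin.ext (Nat.mod_eq_of_lt i.isLt)
    have hdper : ∀ i, d (i + n) = d i := by
      intro i
      simp only [hd]
      congr 1
      exact Fin.ext (Nat.add_mod_right i n)
    have hvald : ∀ i, ValidVertex (d i) := fun i => hval _
    have hdstep : ∀ i, WedgeStep W (d i) (d (i + 1)) := by
      intro i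
      have h := hstep ⟨i % n, Nat.mod_lt _ hn⟩
      have he : (i % n + 1) % n = (i + 1) % n := (Nat.mod_modEq i n).add_right 1
      have := congrArg c (Fin.ext (a := ⟨(i % n + 1) % n, Nat.mod_lt _ (Fin.pos ⟨i % n, Nat.mod_lt _ hn⟩)⟩)
        (b := ⟨(i + 1) % n, Nat.mod_lt _ hn⟩) he)
      rw [this] at h
      exact h
    -- single-step coordinate estimates
    have step1 : ∀ i, (d (i + 1)).1 = (d i).1 + 1 ∨ (d (i + 1)).1 = 1 := by
      intro i
      rcases hdstep i with ⟨-, hq⟩ | ⟨-, hq | hq⟩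
      · left; rw [hq]
      · right; rw [hq]
      · right; rw [hq]
    have step2 : ∀ i, (d (i + 1)).2 ≤ (d i).2 + 1 := by
      intro i
      have hv := (hvald i).2
      rcases hdstep i with ⟨-, hq⟩ | ⟨-, hq | hq⟩
      · rw [hq]
      · rw [hq]
      · rw [hq]; simpa using Nat.succ_le_succ (Nat.le_of_lt hv)
    have hd1pos : ∀ i, 1 ≤ (d i).1 := fun i => (hvald i).1
    -- coordinates grow at most linearly
    have bound1 : ∀ i k, (d (i + k)).1 ≤ (d i).1 + k := by
      intro i k
      induction k with
      | zero => simp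
      | succ k ih =>
        have := step1 (i + k)
        have h1 := hd1pos i
        rw [show i + (k + 1) = i + k + 1 by omega]
        omega
    have bound2 : ∀ i k, (d (i + k)).2 ≤ (d i).2 + k := by
      intro i k
      induction k with
      | zero => simp
      | succ k ih =>
        have := step2 (i + k)
        rw [show i + (k + 1) = i + k + 1 by omega]
        omega
    -- every window of length n contains a reset
    have reset : ∀ i, ∃ k < n, (d (i + k + 1)).1 = 1 := by
      intro i
      by_contra h
      push_neg at h
      have grow : ∀ k ≤ n, (d (i + k)).1 = (d i).1 + k := by
        intro k hk
        induction k with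
        | zero => simp
        | succ k ih =>
          have hk' : k < n := hk
          have h1 := step1 (i + k)
          have h2 := h k hk'
          rw [show i + (k + 1) = i + k + 1 by omega]
          have h3 := ih (Nat.le_of_lt hk')
          omega
      have h1 := grow n le_rfl
      have h2 := congrArg Prod.fst (hdper i)
      omega
    -- first coordinate bounded by n
    have fb : ∀ i, (d i).1 ≤ n := by
      intro i
      obtain ⟨k, hk, hk1⟩ := reset i
      have hb := bound1 (i + k + 1) (n - k - 1)
      rw [show i + k + 1 + (n - k - 1) = i + n by omega] at hb
      have h2 := congrArg Prod.fst (hdper i)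
      omega
    -- minimal second coordinate
    obtain ⟨i0, -, hmin⟩ := Finset.exists_min_image Finset.univ (fun i : Fin n => (c i).2)
      ⟨⟨0, hn⟩, Finset.mem_univ _⟩
    have hmind : ∀ j : ℕ, (d i0.val).2 ≤ (d j).2 := by
      intro j
      rw [hdc i0]
      exact hmin ⟨j % n, Nat.mod_lt _ hn⟩ (Finset.mem_univ _)
    -- the minimum is at most n + 1
    have hjmin : (d i0.val).2 ≤ n + 1 := by
      have hstept := hdstep (i0.val + (n - 1))
      rw [show i0.val + (n - 1) + 1 = i0.val + n by omega, hdper] at hstept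
      have hmp := hmind (i0.val + (n - 1))
      have hfp := fb (i0.val + (n - 1))
      rcases hstept with ⟨-, hq⟩ | ⟨-, hq | hq⟩
      · have h2 := congrArg Prod.snd hq; simp at h2; omega
      · have h2 := congrArg Prod.snd hq; simp at h2; omega
      · have h2 := congrArg Prod.snd hq; simp at h2; omega
    -- conclude membership in the finite box
    intro i _
    have hk := bound2 i0.val (i.val + n - i0.val)
    rw [show i0.val + (i.val + n - i0.val) = i.val + n by
        have := i0.isLt; omega, hdper] at hk
    have hb2 : (c i).2 ≤ 3 * n + 1 := by
      have h1 := i.isLt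
      have h2 := i0.isLt
      rw [← hdc i]
      omega
    have hb1 : (c i).1 ≤ 3 * n + 1 := Nat.le_trans (Nat.le_of_lt (hval i).2) hb2
    exact ⟨hb1, hb2⟩
end
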